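/- Let A be a transitive Lie algebroid with an A-invariant symmetric pairing on g = ker π, and set ĝ = A^∨ ×_{g^∨} g. Then the bracket [(a₁^∨,b₁),(a₂^∨,b₂)] = (b₁·a₂^∨, [b₁,b₂]) (where b·a^∨ is the coadjoint action, (b·a^∨)(c) = a^∨([c,b])), the pairing ⟨(a₁^∨,b₁),(a₂^∨,b₂)⟩ = ⟨b₁,b₂⟩, and the derivation ∂f = (π^∨(df), 0) endow ĝ with the structure of a Courant extension of g (a Courant algebroid with trivial anchor fitting in 0 → Ω¹_X → ĝ → g → 0). -/
import Mathlib


noncomputable section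

/-- The "vector fields" on the algebraic model of the space with function ring `O`. -/
abbrev Vec (O : Type*) [CommRing O] [Algebra ℂ O] := Derivation ℂ O O

/-- Algebraic model of a Courant `O`-algebroid: an `O`-module `Q` equipped with a
Leibniz bracket, an `O`-linear anchor into vector fields, a symmetric `O`-bilinear
pairing, and a derivation `∂ : O → Q`, subject to the Courant axioms. -/
structure CourantAlgebroid (O : Type*) [CommRing O] [Algebra ℂ O]
    (Q : Type*) [AddCommGroup Q] [Module O Q] where
  bracket : Q → Q → Q
  bracket_add_left : ∀ q₁ q₂ q₃, bracket (q₁ + q₂) q₃ = bracket q₁ q₃ + bracket q₂ q₃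
  bracket_add_right : ∀ q₁ q₂ q₃, bracket q₁ (q₂ + q₃) = bracket q₁ q₂ + bracket q₁ q₃
  anchor : Q →ₗ[O] Vec O
  pair : Q →ₗ[O] Q →ₗ[O] O
  pair_symm : ∀ q₁ q₂, pair q₁ q₂ = pair q₂ q₁
  par : O → Q
  par_add : ∀ f g, par (f + g) = par f + par g
  par_mul : ∀ f g, par (f * g) = f • par g + g • par f
  anchor_par : ∀ f, anchor (par f) = 0
  anchor_bracket : ∀ q₁ q₂, anchor (bracket q₁ q₂) = ⁅anchor q₁, anchor q₂⁆
  jacobi : ∀ q q₁ q₂, bracket q (bracket q₁ q₂)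
      = bracket (bracket q q₁) q₂ + bracket q₁ (bracket q q₂)
  leibniz : ∀ (q₁ q₂ : Q) (f : O), bracket q₁ (f • q₂) = f • bracket q₁ q₂ + anchor q₁ f • q₂
  invar : ∀ q q₁ q₂, pair (bracket q q₁) q₂ + pair q₁ (bracket q q₂)
      = anchor q (pair q₁ q₂)
  bracket_par : ∀ (q : Q) (f : O), bracket q (par f) = par (anchor q f)
  pair_par : ∀ (q : Q) (f : O), pair q (par f) = anchor q f
  symm_bracket : ∀ q₁ q₂, bracket q₁ q₂ + bracket q₂ q₁ = par (pair q₁ q₂)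

/-- `Ω_Q`: the `O`-submodule of `Q` generated by the image of the derivation `∂`. -/
def CourantAlgebroid.Omega {O : Type*} [CommRing O] [Algebra ℂ O]
    {Q : Type*} [AddCommGroup Q] [Module O Q] (C : CourantAlgebroid O Q) : Submodule O Q :=
  Submodule.span O (Set.range C.par)

/-- Algebraic model of a Lie `O`-algebroid. -/
structure LieAlgebroid (O : Type*) [CommRing O] [Algebra ℂ O]
    (A : Type*) [AddCommGroup A] [Module O A] where
  bracket : A → A → A
  bracket_add_left : ∀ a b c, bracket (a + b) c = bracket a c + bracket b c
  bracket_add_right : ∀ a b c, bracket a (b + c) = bracket a b + bracket a c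
  anchor : A →ₗ[O] Vec O
  skew : ∀ a b, bracket a b = - bracket b a
  jacobi : ∀ a b c, bracket a (bracket b c) = bracket (bracket a b) c + bracket b (bracket a c)
  anchor_bracket : ∀ a b, anchor (bracket a b) = ⁅anchor a, anchor b⁆
  leibniz : ∀ (a b : A) (f : O), bracket a (f • b) = f • bracket a b + anchor a f • b

variable {O : Type*} [CommRing O] [Algebra ℂ O]
variable {A : Type*} [AddCommGroup A] [Module O A]

/-- Sections of `ĝ = A^∨ ×_{g^∨} g`, modelled as pairs `(a^∨, b)` of a
functional on `A` and an element `b` of `g = ker π`, with `a^∨(c) = ⟨b,c⟩` for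
`c ∈ g`. -/
def IsGhat (L : LieAlgebroid O A) (P : A →ₗ[O] A →ₗ[O] O) (x : (A → O) × A) : Prop :=
  (∀ a b : A, x.1 (a + b) = x.1 a + x.1 b)
  ∧ (∀ (f : O) (a : A), x.1 (f • a) = f * x.1 a)
  ∧ L.anchor x.2 = 0
  ∧ (∀ c : A, L.anchor c = 0 → x.1 c = P x.2 c)

/-- The Leibniz bracket `[(a₁^∨,b₁),(a₂^∨,b₂)] = (b₁·a₂^∨, [b₁,b₂])`, where
`(b·a^∨)(c) = a^∨([c,b])` is the coadjoint action. -/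
def ghatBracket (L : LieAlgebroid O A) (x y : (A → O) × A) : (A → O) × A :=
  (fun c => y.1 (L.bracket c x.2), L.bracket x.2 y.2)

/-- The derivation `∂f = (π^∨(df), 0)`. -/
def ghatPar (L : LieAlgebroid O A) (f : O) : (A → O) × A :=
  (fun a => L.anchor a f, (0 : A))


section Helpers
variable (L : LieAlgebroid O A)

lemma anchor_zero_apply {b : A} (hb : L.anchor b = 0) (f : O) : L.anchor b f = 0 := by
  rw [hb]; rfl

lemma bracket_zero_right (a : A) : L.bracket a 0 = 0 := by
  have h := L.bracket_add_right a 0 0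
  rw [add_zero] at h
  exact (add_eq_right.mp h.symm)

lemma anchor_bracket_zero {b : A} (hb : L.anchor b = 0) (c : A) :
    L.anchor (L.bracket c b) = 0 := by
  rw [L.anchor_bracket, hb, lie_zero]

lemma bracket_smul_left {b : A} (hb : L.anchor b = 0) (f : O) (a : A) :
    L.bracket (f • a) b = f • L.bracket a b := by
  rw [L.skew, L.leibniz, anchor_zero_apply L hb, zero_smul, add_zero, ← smul_neg, ← L.skew]

lemma ghat_neg {P : A →ₗ[O] A →ₗ[O] O} {x : (A → O) × A} (hx : IsGhat L P x) (a : A) :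
    x.1 (-a) = - x.1 a := by
  have h := hx.2.1 (-1 : O) a
  rwa [neg_one_smul, neg_one_mul] at h

/-- the key identity: for `b₁` with trivial anchor (as ghat sections have),
`P b₂ [c, b₁] = P [b₁, b₂] c` on the kernel. -/
lemma coadj_eq {P : A →ₗ[O] A →ₗ[O] O}
    (P_invar : ∀ a b c : A, L.anchor b = 0 → L.anchor c = 0 →
      L.anchor a (P b c) = P (L.bracket a b) c + P b (L.bracket a c))
    {b₁ b₂ c : A} (h1 : L.anchor b₁ = 0) (h2 : L.anchor b₂ = 0) (hc : L.anchor c = 0) :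
    P b₂ (L.bracket c b₁) = P (L.bracket b₁ b₂) c := by
  have h := P_invar b₁ b₂ c h2 hc
  rw [anchor_zero_apply L h1] at h
  have : P b₂ (L.bracket c b₁) = - P b₂ (L.bracket b₁ c) := by
    rw [L.skew c b₁]
    simp
  rw [this]
  exact neg_eq_of_add_eq_zero_left h.symm

end Helpers

/-- for a transitive Lie algebroid `A` with `A`-invariant
symmetric pairing `P` on `g = ker π`, the bracket, pairing and derivation above
endow `ĝ = A^∨ ×_{g^∨} g` with the structure of a Courant extension of `g`
(a Courant algebroid with trivial anchor fitting into `0 → Ω¹ → ĝ → g → 0`):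
`ĝ` is closed under the operations, the bracket satisfies the Jacobi identity,
`O`-Leibniz rule and invariance (with trivial anchor), `∂` kills brackets and
pairings, the symmetrized bracket is `∂` of the pairing, the projection to `g`
is surjective, and its kernel consists of the one-forms (functionals pulled
back from `T`, i.e. killing `g`). -/
theorem ghat_is_courant_extension_of_g
    (L : LieAlgebroid O A)
    (hsurj : Function.Surjective L.anchor)
    (P : A →ₗ[O] A →ₗ[O] O)
    (P_symm : ∀ a b, P a b = P b a)
    (P_invar : ∀ a b c : A, L.anchor b = 0 → L.anchor c = 0 →
      L.anchor a (P b c) = P (L.bracket a b) c + P b (L.bracket a c))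
    (hsplit : ∀ b : A, L.anchor b = 0 →
      ∃ lam : A →ₗ[O] O, ∀ c : A, L.anchor c = 0 → lam c = P b c) :
    -- closure of `ĝ` under the operations
    (∀ x y, IsGhat L P x → IsGhat L P y → IsGhat L P (ghatBracket L x y))
    ∧ (∀ f : O, IsGhat L P (ghatPar L f))
    ∧ (∀ x y, IsGhat L P x → IsGhat L P y → IsGhat L P (x + y))
    ∧ (∀ (f : O) x, IsGhat L P x → IsGhat L P (f • x))
    -- Courant algebroid axioms (with trivial anchor)
    ∧ (∀ x y z, IsGhat L P x → IsGhat L P y → IsGhat L P z →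
        ghatBracket L x (ghatBracket L y z)
          = ghatBracket L (ghatBracket L x y) z + ghatBracket L y (ghatBracket L x z))
    ∧ (∀ (f : O) x y, IsGhat L P x → IsGhat L P y →
        ghatBracket L x (f • y) = f • ghatBracket L x y)
    ∧ (∀ x y z, IsGhat L P x → IsGhat L P y → IsGhat L P z →
        P (ghatBracket L x y).2 z.2 + P y.2 (ghatBracket L x z).2 = 0)
    ∧ (∀ (f : O) x, IsGhat L P x → ghatBracket L x (ghatPar L f) = 0)
    ∧ (∀ (f : O) x, IsGhat L P x → P x.2 (ghatPar L f).2 = 0)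
    ∧ (∀ x y, IsGhat L P x → IsGhat L P y →
        ghatBracket L x y + ghatBracket L y x = ghatPar L (P x.2 y.2))
    -- the exact sequence `0 → Ω¹ → ĝ → g → 0`
    ∧ (∀ b : A, L.anchor b = 0 → ∃ x, IsGhat L P x ∧ x.2 = b)
    ∧ (∀ x, IsGhat L P x → x.2 = 0 → ∀ c : A, L.anchor c = 0 → x.1 c = 0) := by
  
  refine ⟨?_, ?_, ?_, ?_, ?_, ?_, ?_, ?_, ?_, ?_, ?_, ?_⟩
  · -- closure under bracket
    rintro x y ⟨hxa, hxs, hxk, hxp⟩ ⟨hya, hys, hyk, hyp⟩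
    refine ⟨?_, ?_, ?_, ?_⟩
    · intro a b
      simp only [ghatBracket, L.bracket_add_left, hya]
    · intro f a
      simp only [ghatBracket]
      rw [bracket_smul_left L hxk, hys]
    · exact anchor_bracket_zero L hyk x.2
    · intro c hc
      simp only [ghatBracket]
      rw [hyp _ (anchor_bracket_zero L hxk c), coadj_eq L P_invar hxk hyk hc]
  · -- closure under par
    intro f
    refine ⟨?_, ?_, ?_, ?_⟩
    · intro a b; simp [ghatPar]
    · intro g a; simp [ghatPar, smul_eq_mul]
    · simp [ghatPar]
    · intro c hc; simp [ghatPar, anchor_zero_apply L hc]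
  · -- closure under addition
    rintro x y ⟨hxa, hxs, hxk, hxp⟩ ⟨hya, hys, hyk, hyp⟩
    refine ⟨?_, ?_, ?_, ?_⟩
    · intro a b
      simp only [Prod.fst_add, Pi.add_apply, hxa, hya]; ring
    · intro f a
      simp only [Prod.fst_add, Pi.add_apply, hxs, hys]; ring
    · simp [map_add, hxk, hyk]
    · intro c hc
      simp only [Prod.fst_add, Pi.add_apply, Prod.snd_add, hxp c hc, hyp c hc, map_add,
        LinearMap.add_apply]
  · -- closure under scalar multiplication
    rintro f x ⟨hxa, hxs, hxk, hxp⟩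
    refine ⟨?_, ?_, ?_, ?_⟩
    · intro a b
      simp only [Prod.smul_fst, Pi.smul_apply, smul_eq_mul, hxa]; ring
    · intro g a
      simp only [Prod.smul_fst, Pi.smul_apply, smul_eq_mul, hxs]; ring
    · simp [Prod.smul_snd, map_smul, hxk]
    · intro c hc
      simp only [Prod.smul_fst, Prod.smul_snd, Pi.smul_apply, smul_eq_mul, hxp c hc,
        map_smul, LinearMap.smul_apply]
  · -- Jacobi identity
    rintro x y z ⟨hxa, hxs, hxk, hxp⟩ ⟨hya, hys, hyk, hyp⟩ ⟨hza, hzs, hzk, hzp⟩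
    have hz := (⟨hza, hzs, hzk, hzp⟩ : IsGhat L P z)
    refine Prod.ext ?_ ?_
    · funext d
      simp only [ghatBracket, Prod.fst_add, Pi.add_apply]
      have key : L.bracket (L.bracket d x.2) y.2
          = L.bracket d (L.bracket x.2 y.2) + L.bracket (L.bracket d y.2) x.2 := by
        have h := L.jacobi d x.2 y.2
        rw [L.skew x.2 (L.bracket d y.2)] at h
        -- h : [d,[x,y]] = [[d,x],y] - [[d,y],x]
        have : L.bracket (L.bracket d x.2) y.2
            = L.bracket d (L.bracket x.2 y.2) - - L.bracket (L.bracket d y.2) x.2 := by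
          rw [h]; abel
        rw [this]; abel
      rw [key, hza]
    · exact L.jacobi x.2 y.2 z.2
  · -- O-Leibniz (trivial anchor)
    rintro f x y ⟨hxa, hxs, hxk, hxp⟩ ⟨hya, hys, hyk, hyp⟩
    refine Prod.ext ?_ ?_
    · funext c
      simp only [ghatBracket, Prod.smul_fst, Prod.smul_snd, Pi.smul_apply, smul_eq_mul]
    · simp only [ghatBracket, Prod.smul_snd]
      rw [L.leibniz, anchor_zero_apply L hxk, zero_smul, add_zero]
  · -- invariance (trivial anchor)
    rintro x y z ⟨hxa, hxs, hxk, hxp⟩ ⟨hya, hys, hyk, hyp⟩ ⟨hza, hzs, hzk, hzp⟩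
    have h := P_invar x.2 y.2 z.2 hyk hzk
    rw [anchor_zero_apply L hxk] at h
    simpa [ghatBracket] using h.symm
  · -- bracket with par vanishes
    rintro f x ⟨hxa, hxs, hxk, hxp⟩
    refine Prod.ext ?_ ?_
    · funext c
      simp only [ghatBracket, ghatPar]
      rw [anchor_zero_apply L (anchor_bracket_zero L hxk c)]; rfl
    · simp only [ghatBracket, ghatPar]
      exact bracket_zero_right L x.2
  · -- pairing with par vanishes
    rintro f x ⟨hxa, hxs, hxk, hxp⟩
    simp [ghatPar]
  · -- symmetrized bracket is par of pairing
    rintro x y ⟨hxa, hxs, hxk, hxp⟩ ⟨hya, hys, hyk, hyp⟩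
    refine Prod.ext ?_ ?_
    · funext c
      simp only [ghatBracket, ghatPar, Prod.fst_add, Pi.add_apply]
      have h1 : L.anchor (L.bracket c x.2) = 0 := anchor_bracket_zero L hxk c
      have h2 : L.anchor (L.bracket c y.2) = 0 := anchor_bracket_zero L hyk c
      rw [hyp _ h1, hxp _ h2]
      have h := P_invar c x.2 y.2 hxk hyk
      rw [h, P_symm (L.bracket c x.2) y.2]
    · simp only [ghatBracket, ghatPar, Prod.snd_add]
      rw [L.skew x.2 y.2]; abel
  · -- surjectivity onto g
    intro b hb
    obtain ⟨lam, hlam⟩ := hsplit b hb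
    refine ⟨((fun a => lam a), b), ⟨?_, ?_, hb, ?_⟩, rfl⟩
    · intro a c; exact map_add lam a c
    · intro f a
      show lam (f • a) = f * lam a
      rw [map_smul]; rfl
    · intro c hc; exact hlam c hc
  · -- kernel kills g
    rintro x ⟨hxa, hxs, hxk, hxp⟩ h2 c hc
    rw [hxp c hc, h2]
    simp
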